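/- Define the q-deformed Stirling numbers S_q[n,k] by S_q[n,k] = q^{k−1}·S_q[n−1,k−1] + [k]_q·S_q[n−1,k] with S_q[n,0]=S_q[0,n]=δ_{0,n}, and the q-Bell numbers B_q[n] = ∑_{k=0}^{n} S_q[n,k]. Then the q-analogue of Spivey's identity holds: B_q[n+m] = ∑_{r=0}^{n} ∑_{j=0}^{m} q^{rj} · C(n,r) · S_q[m,j] · B_q[r] · [j]_q^{n−r}, with the convention 0^0 = 1. -/
import Mathlib


open Finset

/-- The q-integer `[k]_q = 1 + q + ... + q^(k-1)`. -/
def qint {K : Type*} [CommRing K] (q : K) (k : ℕ) : K := ∑ i ∈ Finset.range k, q ^ i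

/-- The q-deformed Stirling numbers `S_q[n,k]`, satisfying
`S[n,k] = q^(k-1) S[n-1,k-1] + [k]_q S[n-1,k]` with `S[n,0]=S[0,n]=δ_{0,n}`. -/
def Sq {K : Type*} [CommRing K] (q : K) : ℕ → ℕ → K
  | 0, 0 => 1
  | 0, _ + 1 => 0
  | _ + 1, 0 => 0
  | n + 1, k + 1 => q ^ k * Sq q n k + qint q (k + 1) * Sq q n (k + 1)

/-- The q-Bell numbers. -/
def Bq {K : Type*} [CommRing K] (q : K) (n : ℕ) : K := ∑ k ∈ Finset.range (n + 1), Sq q n k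

section Aux
variable {K : Type*} [CommRing K] (q : K)

lemma qint_zero : qint q 0 = 0 := by simp [qint]

lemma qint_succ (k : ℕ) : qint q (k+1) = qint q k + q^k := by
  simp [qint, Finset.sum_range_succ]

lemma qint_add (a b : ℕ) : qint q (a + b) = qint q a + q ^ a * qint q b := by
  induction b with
  | zero => simp [qint_zero]
  | succ b ih => rw [← Nat.add_assoc, qint_succ, ih, qint_succ, pow_add]; ring

lemma Sq_succ_zero (n : ℕ) : Sq q (n+1) 0 = 0 := rfl

lemma Sq_zero_left (k : ℕ) : Sq q 0 k = if k = 0 then 1 else 0 := by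
  cases k <;> rfl

lemma Sq_eq_zero (n k : ℕ) (h : n < k) : Sq q n k = 0 := by
  induction n generalizing k with
  | zero => cases k with
    | zero => omega
    | succ k => rfl
  | succ n ih => cases k with
    | zero => omega
    | succ k => rw [Sq, ih k (by omega), ih (k+1) (by omega)]; ring

/-- Shifted Stirling helper: `Sq'` -/
def Sq' (r k j : ℕ) : K := if j ≤ k then Sq q r (k - j) else 0

lemma dagger (r k j : ℕ) :
    q ^ k * Sq' q r k j + qint q (k+1) * Sq' q r (k+1) j
      = qint q j * Sq' q r (k+1) j + q ^ j * Sq' q (r+1) (k+1) j := by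
  rcases le_or_gt j k with hj | hj
  · have h1 : j ≤ k + 1 := by omega
    have h2 : k + 1 - j = (k - j) + 1 := by omega
    simp only [Sq', if_pos hj, if_pos h1, h2, Sq]
    have h3 : q ^ k = q ^ j * q ^ (k - j) := by
      rw [← pow_add]; congr 1; omega
    have h4 : qint q (k+1) = qint q j + q ^ j * qint q (k - j + 1) := by
      rw [← qint_add]; congr 1; omega
    rw [h3, h4]; ring
  · by_cases h1 : j ≤ k + 1
    · have hjk : j = k + 1 := by omega
      subst hjk
      simp only [Sq', if_neg (by omega : ¬ (k+1) ≤ k), if_pos (le_refl (k+1)),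
        Nat.sub_self, Sq_succ_zero]
      ring
    · simp only [Sq', if_neg (by omega : ¬ j ≤ k), if_neg h1]
      ring

lemma pascal_sum (n : ℕ) (a : ℕ → K) :
    ∑ r ∈ range (n+2), ((n+1).choose r : K) * a r
      = ∑ r ∈ range (n+1), (n.choose r : K) * a r
        + ∑ r ∈ range (n+1), (n.choose r : K) * a (r+1) := by
  rw [Finset.sum_range_succ' (fun r => ((n+1).choose r : K) * a r) (n+1)]
  have h : ∀ r ∈ range (n+1), ((n+1).choose (r+1) : K) * a (r+1)
      = (n.choose r : K) * a (r+1) + (n.choose (r+1) : K) * a (r+1) := by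
    intro r _
    rw [Nat.choose_succ_succ]
    push_cast; ring
  rw [Finset.sum_congr rfl h, Finset.sum_add_distrib]
  have h2 : ∑ r ∈ range (n+1), (n.choose (r+1) : K) * a (r+1)
        + ((n+1).choose 0 : K) * a 0
      = ∑ r ∈ range (n+1), (n.choose r : K) * a r := by
    have h3 : ((n+1).choose 0 : K) * a 0 = (n.choose 0 : K) * a 0 := by simp
    rw [h3, ← Finset.sum_range_succ' (fun r => (n.choose r : K) * a r) (n+1),
      Finset.sum_range_succ]
    simp [Nat.choose_succ_self]
  rw [add_assoc, h2]
  ring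

lemma main_lemma (n m : ℕ) : ∀ k, Sq q (n + m) k
    = ∑ j ∈ range (m+1), ∑ r ∈ range (n+1),
        (n.choose r : K) * q ^ (j * r) * (qint q j) ^ (n - r) * Sq q m j * Sq' q r k j := by
  induction n with
  | zero =>
    intro k
    simp only [Nat.zero_add, zero_add, range_one, sum_singleton, Nat.choose_self,
      Nat.cast_one, Nat.mul_zero, pow_zero, Nat.zero_sub, one_mul, mul_one]
    have h : ∀ j, Sq q m j * Sq' q 0 k j = if j = k then Sq q m j else 0 := by
      intro j
      unfold Sq'
      rcases le_or_gt j k with hj | hj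
      · rw [if_pos hj, Sq_zero_left]
        by_cases hjk : j = k
        · simp [hjk]
        · rw [if_neg (by omega : ¬ k - j = 0), if_neg hjk]; ring
      · rw [if_neg (by omega : ¬ j ≤ k), if_neg (by omega : ¬ j = k)]; ring
    rw [Finset.sum_congr rfl (fun j _ => h j), Finset.sum_ite_eq' (range (m+1)) k (Sq q m)]
    by_cases hk : k ≤ m
    · rw [if_pos (by simpa using Nat.lt_succ_of_le hk)]
    · rw [if_neg (by simp; omega), Sq_eq_zero q m k (by omega)]
  | succ n ih =>
    intro k
    have e : n + 1 + m = (n + m) + 1 := by omega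
    rcases k with _ | k
    · rw [e, Sq_succ_zero]
      symm
      apply Finset.sum_eq_zero
      intro j _
      apply Finset.sum_eq_zero
      intro r _
      rcases j with _ | j
      · rcases r with _ | r
        · simp [Sq', qint_zero, zero_pow (Nat.succ_ne_zero n)]
        · simp [Sq', Sq_succ_zero]
      · simp [Sq', Nat.not_succ_le_zero]
    · rw [e, Sq, ih k, ih (k+1)]
      have key : ∀ j, ∑ r ∈ range (n+1+1),
          ((n+1).choose r : K) * q ^ (j*r) * (qint q j) ^ (n+1-r) * Sq q m j
            * Sq' q r (k+1) j
        = ∑ r ∈ range (n+1),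
          (n.choose r : K) * q^(j*r) * (qint q j)^(n-r) * Sq q m j *
            (qint q j * Sq' q r (k+1) j + q^j * Sq' q (r+1) (k+1) j) := by
        intro j
        have step1 : (∑ r ∈ range (n+2), ((n+1).choose r : K) * q ^ (j*r)
              * (qint q j)^(n+1-r) * Sq q m j * Sq' q r (k+1) j)
            = ∑ r ∈ range (n+2), ((n+1).choose r : K)
              * (q ^ (j*r) * (qint q j)^(n+1-r) * Sq q m j * Sq' q r (k+1) j) :=
          Finset.sum_congr rfl fun r _ => by ring
        rw [step1, pascal_sum, ← Finset.sum_add_distrib]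
        apply Finset.sum_congr rfl
        intro r hr
        have hr' : r ≤ n := by
          have := Finset.mem_range.mp hr; omega
        have h1 : n + 1 - r = (n - r) + 1 := by omega
        have h2 : j * (r+1) = j * r + j := by ring
        have h3 : n + 1 - (r + 1) = n - r := by omega
        rw [h1, h2, h3, pow_add, pow_succ]
        ring
      rw [Finset.sum_congr rfl (fun j _ => key j)]
      rw [Finset.mul_sum, Finset.mul_sum, ← Finset.sum_add_distrib]
      apply Finset.sum_congr rfl
      intro j _
      rw [Finset.mul_sum, Finset.mul_sum, ← Finset.sum_add_distrib]
      apply Finset.sum_congr rfl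
      intro r _
      linear_combination ((n.choose r : K) * q^(j*r) * (qint q j)^(n-r) * Sq q m j)
        * dagger q r k j

lemma sum_Sq' (r j N : ℕ) (hj : j ≤ N) (hr : r ≤ N - j) :
    ∑ k ∈ range (N+1), Sq' q r k j = Bq q r := by
  have h1 : ∑ k ∈ range (N+1), Sq' q r k j = ∑ k ∈ Ico j (N+1), Sq q r (k - j) := by
    rw [range_eq_Ico, ← Finset.sum_Ico_consecutive _ (Nat.zero_le j) (by omega : j ≤ N+1)]
    have h0 : ∑ k ∈ Ico 0 j, Sq' q r k j = 0 :=
      Finset.sum_eq_zero fun k hk => by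
        have := (Finset.mem_Ico.mp hk).2
        simp only [Sq']
        rw [if_neg (by omega : ¬ j ≤ k)]
    rw [h0, zero_add]
    exact Finset.sum_congr rfl fun k hk => by
      have := (Finset.mem_Ico.mp hk).1
      simp [Sq', this]
  rw [h1, Finset.sum_Ico_eq_sum_range]
  simp only [Nat.add_sub_cancel_left]
  rw [Bq]
  symm
  apply Finset.sum_subset
  · apply Finset.range_subset_range.mpr; omega
  · intro i hi hi2
    apply Sq_eq_zero
    simp only [Finset.mem_range] at hi2
    omega

end Aux

theorem stmt_18 {K : Type*} [CommRing K] (q : K) (n m : ℕ) :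
    Bq q (n + m) =
      ∑ r ∈ Finset.range (n + 1), ∑ j ∈ Finset.range (m + 1),
        q ^ (r * j) * (Nat.choose n r : K) * Sq q m j * Bq q r * (qint q j) ^ (n - r) := by
  rw [Bq, Finset.sum_congr rfl (fun k _ => main_lemma q n m k), Finset.sum_comm]
  have step : ∀ j ∈ Finset.range (m+1),
      (∑ k ∈ Finset.range (n+m+1), ∑ r ∈ Finset.range (n+1),
        (n.choose r : K) * q ^ (j * r) * (qint q j) ^ (n - r) * Sq q m j * Sq' q r k j)
      = ∑ r ∈ Finset.range (n+1),
        (n.choose r : K) * q ^ (j * r) * (qint q j) ^ (n - r) * Sq q m j * Bq q r := by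
    intro j hj
    rw [Finset.sum_comm]
    apply Finset.sum_congr rfl
    intro r hr
    rw [← Finset.mul_sum, sum_Sq' q r j (n+m) (by have := Finset.mem_range.mp hj; omega)
      (by have := Finset.mem_range.mp hj; have := Finset.mem_range.mp hr; omega)]
  rw [Finset.sum_congr rfl step, Finset.sum_comm]
  apply Finset.sum_congr rfl; intro r _
  apply Finset.sum_congr rfl; intro j _
  rw [Nat.mul_comm j r]; ring
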